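/- (Bundling Lemma) For any feasible solution x* to an instance of the average-value allocation problem (AVA), there exists a bundling-based solution x̂ (a solution partitionable into permissible bundles) whose total value v·x̂ satisfies v·x̂ ≥ (1/2)·v·x*. -/

import Mathlib

variable {I J : Type*} [Fintype I] [Fintype J] [DecidableEq I] [DecidableEq J]

/-- Feasibility of an allocation for an AVA instance: each buyer's total value
is at least `ρ j` times the number of items allocated to them. -/
def Feasible (v : I → J → ℝ) (ρ : J → ℝ) (x : I → Option J) : Prop :=
  ∀ j : J, ρ j * ((Finset.univ.filter fun i => x i = some j).card : ℝ) ≤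
    ∑ i ∈ Finset.univ.filter fun i => x i = some j, v i j

/-- The social welfare (total value) of an allocation. -/
def totalValue (v : I → J → ℝ) (x : I → Option J) : ℝ :=
  ∑ i, ((x i).map (v i)).getD 0

/-- A bundling-based solution: the allocated edges can be partitioned into
permissible bundles, each consisting of a single P-edge `(g i, j)`
(with `v (g i) j ≥ ρ j`) together with zero or more N-edges, jointly
satisfying the average-value constraint. The map `g` sends every allocated
item to the P-item of its bundle. -/
def BundlingBased (v : I → J → ℝ) (ρ : J → ℝ) (x : I → Option J) : Prop :=
  ∃ g : I → I,
    (∀ i j, x i = some j →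
      x (g i) = some j ∧ ρ j ≤ v (g i) j ∧ g (g i) = g i ∧ (g i ≠ i → v i j < ρ j)) ∧
    (∀ j p, x p = some j → g p = p →
      ρ j * ((Finset.univ.filter fun i => x i = some j ∧ g i = p).card : ℝ) ≤
        ∑ i ∈ Finset.univ.filter fun i => x i = some j ∧ g i = p, v i j)

/-- Packing lemma: items `N` with positive sizes `d` can be packed into bins `P`
with capacities `s` (total capacity at least total size), dropping at most `P.card` items. -/
lemma pack {I : Type*} [DecidableEq I] (d : I → ℝ) :
    ∀ (n : ℕ) (N P : Finset I) (s : I → ℝ), N.card = n →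
    (∀ p ∈ P, 0 ≤ s p) → (∀ m ∈ N, 0 < d m) →
    (∑ m ∈ N, d m ≤ ∑ p ∈ P, s p) →
    ∃ (N' : Finset I) (f : I → I), N' ⊆ N ∧ (∀ m ∈ N', f m ∈ P) ∧
      (∀ p ∈ P, ∑ m ∈ N'.filter (fun m => f m = p), d m ≤ s p) ∧
      (N \ N').card ≤ P.card := by
  intro n
  induction n with
  | zero =>
    intro N P s hcard hs hd hsum
    have hN : N = ∅ := Finset.card_eq_zero.mp hcard
    subst hN
    exact ⟨∅, id, by simp, by simp, fun p hp => by simpa using hs p hp, by simp⟩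
  | succ n ih =>
    intro N P s hcard hs hd hsum
    have hNne : N.Nonempty := by rw [← Finset.card_pos, hcard]; omega
    obtain ⟨n₀, hn₀N, hmin⟩ := N.exists_min_image d hNne
    have hd₀ : 0 < d n₀ := hd n₀ hn₀N
    by_cases hfit : ∃ p ∈ P, d n₀ ≤ s p
    · obtain ⟨p, hpP, hps⟩ := hfit
      set s' := Function.update s p (s p - d n₀) with hs'def
      have hsumP : ∑ q ∈ P, s' q = (∑ q ∈ P, s q) - d n₀ := by
        rw [hs'def, Finset.sum_update_of_mem hpP, Finset.sdiff_singleton_eq_erase]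
        have := Finset.add_sum_erase P s hpP
        linarith
      obtain ⟨N'', f, hsub, hfP, hfib, hdrop⟩ := ih (N.erase n₀) P s'
        (by rw [Finset.card_erase_of_mem hn₀N, hcard]; rfl)
        (by
          intro q hq
          by_cases hqp : q = p
          · subst hqp; rw [hs'def, Function.update_self]; linarith
          · rw [hs'def, Function.update_of_ne hqp]; exact hs q hq)
        (fun m hm => hd m (Finset.mem_of_mem_erase hm))
        (by
          have := Finset.add_sum_erase N d hn₀N
          rw [hsumP]; linarith)
      have hn₀N'' : n₀ ∉ N'' := fun h => (Finset.mem_erase.mp (hsub h)).1 rfl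
      refine ⟨insert n₀ N'', Function.update f n₀ p, ?_, ?_, ?_, ?_⟩
      · exact Finset.insert_subset hn₀N (hsub.trans (Finset.erase_subset _ _))
      · intro m hm
        rcases Finset.mem_insert.mp hm with h | h
        · subst h; rw [Function.update_self]; exact hpP
        · have : m ≠ n₀ := fun e => hn₀N'' (e ▸ h)
          rw [Function.update_of_ne this]; exact hfP m h
      · intro q hq
        have hfilt : (insert n₀ N'').filter (fun m => Function.update f n₀ p m = q)
            = (if p = q then insert n₀ ((N''.filter (fun m => f m = q))) else (N''.filter (fun m => f m = q))) := by
          rw [Finset.filter_insert]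
          have h1 : N''.filter (fun m => Function.update f n₀ p m = q) = N''.filter (fun m => f m = q) := by
            apply Finset.filter_congr
            intro m hm
            have : m ≠ n₀ := fun e => hn₀N'' (e ▸ hm)
            rw [Function.update_of_ne this]
          rw [h1, Function.update_self]
        by_cases hpq : p = q
        · subst hpq
          rw [hfilt, if_pos rfl, Finset.sum_insert (fun h => hn₀N'' (Finset.mem_filter.mp h).1)]
          have := hfib p hpP
          rw [hs'def, Function.update_self] at this
          linarith
        · rw [hfilt, if_neg hpq]
          have := hfib q hq
          rw [hs'def, Function.update_of_ne (Ne.symm hpq)] at this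
          exact this
      · have hset : N \ insert n₀ N'' = (N.erase n₀) \ N'' := by
          ext a
          simp only [Finset.mem_sdiff, Finset.mem_insert, Finset.mem_erase]
          tauto
        rw [hset]; exact hdrop
    · push_neg at hfit
      have hPne : P.Nonempty := by
        by_contra h
        rw [Finset.not_nonempty_iff_eq_empty] at h
        subst h
        simp only [Finset.sum_empty] at hsum
        have : 0 < ∑ m ∈ N, d m := Finset.sum_pos hd hNne
        linarith
      have h1 : (N.card : ℝ) * d n₀ ≤ ∑ m ∈ N, d m := by
        have := Finset.card_nsmul_le_sum N d (d n₀) hmin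
        rwa [nsmul_eq_mul] at this
      have h2 : ∑ p ∈ P, s p < (P.card : ℝ) * d n₀ := by
        have := Finset.sum_lt_sum_of_nonempty hPne hfit
        rwa [Finset.sum_const, nsmul_eq_mul] at this
      have hlt : N.card < P.card := by
        have h3 : (N.card : ℝ) * d n₀ < (P.card : ℝ) * d n₀ := by linarith
        have h4 : (N.card : ℝ) < (P.card : ℝ) := lt_of_mul_lt_mul_right h3 hd₀.le
        exact_mod_cast h4
      refine ⟨∅, id, by simp, by simp, fun p hp => by simpa using hs p hp, ?_⟩
      rw [Finset.sdiff_empty]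
      exact le_of_lt hlt

/-- Per-buyer bundling: keep a subset of at least half the value. -/
lemma perBuyer {I : Type*} [DecidableEq I] (w : I → ℝ) (ρ0 : ℝ) (S : Finset I)
    (hw : ∀ i, 0 ≤ w i) (hρ : 0 ≤ ρ0)
    (hfeas : ρ0 * (S.card : ℝ) ≤ ∑ i ∈ S, w i) :
    ∃ (T : Finset I) (g : I → I), T ⊆ S ∧
      (∀ i ∈ T, g i ∈ T ∧ ρ0 ≤ w (g i) ∧ g (g i) = g i ∧ (g i ≠ i → w i < ρ0)) ∧
      (∀ p ∈ T, g p = p →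
        ρ0 * ((T.filter fun i => g i = p).card : ℝ) ≤ ∑ i ∈ T.filter (fun i => g i = p), w i) ∧
      ρ0 * (T.card : ℝ) ≤ ∑ i ∈ T, w i ∧
      (1/2) * ∑ i ∈ S, w i ≤ ∑ i ∈ T, w i := by
  classical
  set P := S.filter (fun i => ρ0 ≤ w i) with hPdef
  set Nn := S.filter (fun i => ¬ ρ0 ≤ w i) with hNdef
  have hwP : ∀ p ∈ P, ρ0 ≤ w p := fun p hp => (Finset.mem_filter.mp hp).2
  have hwN : ∀ m ∈ Nn, w m < ρ0 := fun m hm => lt_of_not_ge (Finset.mem_filter.mp hm).2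
  have hsumsplit : ∑ i ∈ P, w i + ∑ i ∈ Nn, w i = ∑ i ∈ S, w i :=
    Finset.sum_filter_add_sum_filter_not S _ w
  have hcardsplit : P.card + Nn.card = S.card :=
    Finset.card_filter_add_card_filter_not _
  have hkey : ∑ m ∈ Nn, (ρ0 - w m) ≤ ∑ p ∈ P, (w p - ρ0) := by
    rw [Finset.sum_sub_distrib, Finset.sum_sub_distrib, Finset.sum_const, Finset.sum_const,
      nsmul_eq_mul, nsmul_eq_mul]
    have hc : (P.card : ℝ) + (Nn.card : ℝ) = (S.card : ℝ) := by exact_mod_cast hcardsplit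
    nlinarith [hfeas, hsumsplit]
  obtain ⟨N', f, hsub, hfP, hfib, hdrop⟩ :=
    pack (fun m => ρ0 - w m) Nn.card Nn P (fun p => w p - ρ0) rfl
      (fun p hp => by linarith [hwP p hp])
      (fun m hm => by linarith [hwN m hm])
      hkey
  have hdisjPN : Disjoint P Nn := Finset.disjoint_filter_filter_not S S _
  have hdisj : Disjoint P N' := hdisjPN.mono_right hsub
  refine ⟨P ∪ N', fun i => if i ∈ N' then f i else i, ?_, ?_, ?_, ?_, ?_⟩
  · exact Finset.union_subset (Finset.filter_subset _ _) (hsub.trans (Finset.filter_subset _ _))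
  · intro i hi
    rcases Finset.mem_union.mp hi with h | h
    · have hiN' : i ∉ N' := Finset.disjoint_left.mp hdisj h
      simp only [if_neg hiN']
      exact ⟨hi, hwP i h, by simp [if_neg hiN'], fun hne => absurd rfl hne⟩
    · have hfi : f i ∈ P := hfP i h
      have hfiN' : f i ∉ N' := Finset.disjoint_left.mp hdisj hfi
      simp only [if_pos h]
      exact ⟨Finset.mem_union_left _ hfi, hwP _ hfi, by simp [if_neg hfiN'],
        fun _ => hwN i (hsub h)⟩
  · intro p hp hgp
    have hpP : p ∈ P := by
      rcases Finset.mem_union.mp hp with h | h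
      · exact h
      · exfalso
        simp only [if_pos h] at hgp
        have : ρ0 ≤ w p := hgp ▸ hwP _ (hfP p h)
        exact absurd this (not_le.mpr (hwN p (hsub h)))
    have hpN' : p ∉ N' := Finset.disjoint_left.mp hdisj hpP
    have hfilt : (P ∪ N').filter (fun i => (if i ∈ N' then f i else i) = p)
        = insert p (N'.filter (fun m => f m = p)) := by
      ext a
      simp only [Finset.mem_filter, Finset.mem_union, Finset.mem_insert]
      constructor
      · rintro ⟨haPN, hga⟩
        by_cases haN' : a ∈ N'
        · rw [if_pos haN'] at hga; exact Or.inr ⟨haN', hga⟩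
        · rw [if_neg haN'] at hga; exact Or.inl hga
      · rintro (rfl | ⟨haN', hfa⟩)
        · exact ⟨Or.inl hpP, by rw [if_neg hpN']⟩
        · exact ⟨Or.inr haN', by rw [if_pos haN']; exact hfa⟩
    rw [hfilt]
    have hpnotin : p ∉ N'.filter (fun m => f m = p) :=
      fun h => hpN' (Finset.mem_filter.mp h).1
    rw [Finset.sum_insert hpnotin, Finset.card_insert_of_notMem hpnotin]
    have hfp := hfib p hpP
    have hexp : ∑ m ∈ N'.filter (fun m => f m = p), (ρ0 - w m)
        = ρ0 * ((N'.filter (fun m => f m = p)).card : ℝ)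
          - ∑ m ∈ N'.filter (fun m => f m = p), w m := by
      rw [Finset.sum_sub_distrib, Finset.sum_const, nsmul_eq_mul, mul_comm]
    push_cast
    rw [hexp] at hfp
    linarith
  · -- feasibility of T
    rw [Finset.sum_union hdisj, Finset.card_union_of_disjoint hdisj]
    have hN'key : ∑ m ∈ N', (ρ0 - w m) ≤ ∑ p ∈ P, (w p - ρ0) := by
      refine le_trans (Finset.sum_le_sum_of_subset_of_nonneg hsub ?_) hkey
      intro m hm _
      linarith [hwN m hm]
    rw [Finset.sum_sub_distrib, Finset.sum_sub_distrib, Finset.sum_const, Finset.sum_const,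
      nsmul_eq_mul, nsmul_eq_mul] at hN'key
    push_cast
    linarith
  · -- value at least half
    have hTS : P ∪ N' ⊆ S :=
      Finset.union_subset (Finset.filter_subset _ _) (hsub.trans (Finset.filter_subset _ _))
    have hsdiff : ∑ i ∈ S \ (P ∪ N'), w i + ∑ i ∈ P ∪ N', w i = ∑ i ∈ S, w i :=
      Finset.sum_sdiff hTS
    have hseteq : S \ (P ∪ N') = Nn \ N' := by
      ext a
      constructor
      · intro ha
        rcases Finset.mem_sdiff.mp ha with ⟨haS, hno⟩
        have haP : a ∉ P := fun h => hno (Finset.mem_union_left _ h)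
        have haN' : a ∉ N' := fun h => hno (Finset.mem_union_right _ h)
        have haNn : a ∈ Nn :=
          Finset.mem_filter.mpr ⟨haS, fun hle => haP (Finset.mem_filter.mpr ⟨haS, hle⟩)⟩
        exact Finset.mem_sdiff.mpr ⟨haNn, haN'⟩
      · intro ha
        rcases Finset.mem_sdiff.mp ha with ⟨haN, haN'⟩
        rcases Finset.mem_filter.mp haN with ⟨haS, hnle⟩
        refine Finset.mem_sdiff.mpr ⟨haS, fun hin => ?_⟩
        rcases Finset.mem_union.mp hin with h | h
        · exact hnle (Finset.mem_filter.mp h).2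
        · exact haN' h
    have hdropval : ∑ i ∈ Nn \ N', w i ≤ ρ0 * ((Nn \ N').card : ℝ) := by
      have := Finset.sum_le_card_nsmul (Nn \ N') w ρ0
        (fun m hm => le_of_lt (hwN m (Finset.mem_sdiff.mp hm).1))
      rwa [nsmul_eq_mul, mul_comm] at this
    have hPval : ρ0 * (P.card : ℝ) ≤ ∑ p ∈ P, w p := by
      have h := Finset.card_nsmul_le_sum P w ρ0 hwP
      rw [nsmul_eq_mul] at h
      linarith
    have hcardle : ((Nn \ N').card : ℝ) ≤ (P.card : ℝ) := by exact_mod_cast hdrop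
    have hPT : ∑ p ∈ P, w p ≤ ∑ i ∈ P ∪ N', w i :=
      Finset.sum_le_sum_of_subset_of_nonneg Finset.subset_union_left (fun i _ _ => hw i)
    have : ∑ i ∈ Nn \ N', w i ≤ ∑ i ∈ P ∪ N', w i := by
      calc ∑ i ∈ Nn \ N', w i ≤ ρ0 * ((Nn \ N').card : ℝ) := hdropval
        _ ≤ ρ0 * (P.card : ℝ) := by nlinarith
        _ ≤ ∑ p ∈ P, w p := hPval
        _ ≤ ∑ i ∈ P ∪ N', w i := hPT
    rw [hseteq] at hsdiff
    linarith

/-- The total value of an allocation equals the sum over buyers of the values allocated. -/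
lemma totalValue_eq (v : I → J → ℝ) (x : I → Option J) :
    totalValue v x = ∑ j, ∑ i ∈ Finset.univ.filter (fun i => x i = some j), v i j := by
  unfold totalValue
  have : ∀ j : J, ∑ i ∈ Finset.univ.filter (fun i => x i = some j), v i j
      = ∑ i : I, if x i = some j then v i j else 0 := by
    intro j; rw [Finset.sum_filter]
  simp_rw [this]
  rw [Finset.sum_comm]
  apply Finset.sum_congr rfl
  intro i _
  cases h : x i with
  | none => simp [h]
  | some j₀ =>
    simp only [h, Option.map_some, Option.getD_some, Option.some_inj]
    rw [Finset.sum_ite_eq Finset.univ j₀ (fun j => v i j)]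
    simp

/-- Bundling Lemma: any feasible AVA solution admits a bundling-based solution
of at least half its value. -/
theorem stmt_2 (v : I → J → ℝ) (ρ : J → ℝ)
    (hv : ∀ i j, 0 ≤ v i j) (hρ : ∀ j, 0 ≤ ρ j)
    (xstar : I → Option J) (hfeas : Feasible v ρ xstar) :
    ∃ xhat : I → Option J, Feasible v ρ xhat ∧ BundlingBased v ρ xhat ∧
      (1 / 2) * totalValue v xstar ≤ totalValue v xhat := by
  classical
  have H : ∀ j : J, ∃ (T : Finset I) (g : I → I),
      T ⊆ Finset.univ.filter (fun i => xstar i = some j) ∧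
      (∀ i ∈ T, g i ∈ T ∧ ρ j ≤ v (g i) j ∧ g (g i) = g i ∧ (g i ≠ i → v i j < ρ j)) ∧
      (∀ p ∈ T, g p = p →
        ρ j * ((T.filter fun i => g i = p).card : ℝ) ≤ ∑ i ∈ T.filter (fun i => g i = p), v i j) ∧
      ρ j * (T.card : ℝ) ≤ ∑ i ∈ T, v i j ∧
      (1/2) * ∑ i ∈ Finset.univ.filter (fun i => xstar i = some j), v i j ≤ ∑ i ∈ T, v i j :=
    fun j => perBuyer (fun i => v i j) (ρ j) _ (fun i => hv i j) (hρ j) (hfeas j)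
  choose T G hTA hG hBun hFeasT hVal using H
  have hTstar : ∀ j, ∀ i ∈ T j, xstar i = some j := by
    intro j i hi
    exact (Finset.mem_filter.mp (hTA j hi)).2
  set xhat : I → Option J :=
    fun i => (xstar i).bind (fun j => if i ∈ T j then some j else none) with hxhatdef
  have hx : ∀ i j, xhat i = some j ↔ i ∈ T j := by
    intro i j
    constructor
    · intro h
      cases hxi : xstar i with
      | none => rw [hxhatdef] at h; simp [hxi] at h
      | some j' =>
        rw [hxhatdef] at h
        by_cases hT : i ∈ T j'
        · simp only [hxi, Option.bind_some, if_pos hT, Option.some_inj] at h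
          exact h ▸ hT
        · simp [hxi, hT] at h
    · intro h
      have hxi := hTstar j i h
      rw [hxhatdef]
      simp [hxi, h]
  have hfilter : ∀ j, Finset.univ.filter (fun i => xhat i = some j) = T j := by
    intro j
    ext i
    simp [Finset.mem_filter, hx]
  refine ⟨xhat, ?_, ?_, ?_⟩
  · intro j
    rw [hfilter j]
    exact hFeasT j
  · set g : I → I :=
      fun i => (xstar i).elim i (fun j => if i ∈ T j then G j i else i) with hgdef
    have hgval : ∀ i j, xhat i = some j → g i = G j i := by
      intro i j hij
      have hiT : i ∈ T j := (hx i j).mp hij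
      have hxi : xstar i = some j := hTstar j i hiT
      rw [hgdef]
      simp [hxi, hiT]
    refine ⟨g, ?_, ?_⟩
    · intro i j hij
      have hiT : i ∈ T j := (hx i j).mp hij
      obtain ⟨h1, h2, h3, h4⟩ := hG j i hiT
      have hgi : g i = G j i := hgval i j hij
      have hxgi : xhat (g i) = some j := by rw [hgi]; exact (hx _ j).mpr h1
      refine ⟨hxgi, by rw [hgi]; exact h2, ?_, by rw [hgi]; exact h4⟩
      rw [hgval (g i) j hxgi, hgi, h3]
    · intro j p hp hgp
      have hpT : p ∈ T j := (hx p j).mp hp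
      have hgp' : G j p = p := by rw [← hgval p j hp]; exact hgp
      have hfe : Finset.univ.filter (fun i => xhat i = some j ∧ g i = p)
          = (T j).filter (fun i => G j i = p) := by
        ext i
        simp only [Finset.mem_filter, Finset.mem_univ, true_and]
        constructor
        · rintro ⟨hij, hgi⟩
          exact ⟨(hx i j).mp hij, by rw [← hgval i j hij]; exact hgi⟩
        · rintro ⟨hiT, hGi⟩
          have hij : xhat i = some j := (hx i j).mpr hiT
          exact ⟨hij, by rw [hgval i j hij]; exact hGi⟩
      rw [hfe]
      exact hBun j p hpT hgp'
  · rw [totalValue_eq, totalValue_eq, Finset.mul_sum]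
    apply Finset.sum_le_sum
    intro j _
    rw [hfilter j]
    exact hVal j
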